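/- For the recursively defined monomial sets B(k_1,…,k_N) (B() = {1}, B(k_1,…,k_N) = sh(B(k_1,…,k_{N−1})) ∪ f_0·B(k_1,…,k_N−1), with the final entry dropped when it reaches 0 and re-sorted nondecreasingly), the union in the recursion is disjoint and the cardinality satisfies |B(k_1,…,k_N)| = ∏_{i=1}^N (k_i + 1). -/

import Mathlib

/-- Monomials in the free commutative monoid on generators `f_0, f_1, f_2, …` are
finitely supported exponent vectors `ℕ →₀ ℕ`; `f_i` is `Finsupp.single i 1` and the
monoid operation is addition of exponents. -/
noncomputable def shMon : (ℕ →₀ ℕ) → (ℕ →₀ ℕ) :=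
  Finsupp.mapDomain (· + 1)

/-- Re-sort a list of natural numbers in nonincreasing order. -/
def sortDesc (l : List ℕ) : List ℕ :=
  l.insertionSort (fun a b => b ≤ a)

/-- Fuelled version of the recursion
`B() = {1}`, `B(k_1,…,k_N) = sh(B(k_1,…,k_{N−1})) ∪ f_0·B(sorted(k_1,…,k_N − 1))`
(dropping zero entries), where a tuple `k_1 ≤ ⋯ ≤ k_N` is represented by the
*nonincreasing* list `[k_N, …, k_1]`.  The fuel `l.sum + l.length` always suffices. -/
noncomputable def BsetAux : ℕ → List ℕ → Set (ℕ →₀ ℕ)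
  | 0, _ => {0}
  | _ + 1, [] => {0}
  | fuel + 1, 0 :: ks => BsetAux fuel ks
  | fuel + 1, (k + 1) :: ks =>
      shMon '' BsetAux fuel ks ∪
        (fun v => Finsupp.single 0 1 + v) '' BsetAux fuel (sortDesc (k :: ks))

/-- The set of monomials `B(k_1,…,k_N)` (the list is the nonincreasing list
`[k_N,…,k_1]`). -/
noncomputable def Bset (l : List ℕ) : Set (ℕ →₀ ℕ) :=
  BsetAux (l.sum + l.length) l

lemma sortDesc_perm (l : List ℕ) : (sortDesc l).Perm l := List.perm_insertionSort _ l

lemma sortDesc_sum (l : List ℕ) : (sortDesc l).sum = l.sum := (sortDesc_perm l).sum_eq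

lemma sortDesc_length (l : List ℕ) : (sortDesc l).length = l.length :=
  (sortDesc_perm l).length_eq

lemma shMon_injective : Function.Injective shMon :=
  Finsupp.mapDomain_injective (fun a b h => by omega)

lemma shMon_apply_zero (v : ℕ →₀ ℕ) : shMon v 0 = 0 := by
  apply Finsupp.mapDomain_notin_range
  simp

lemma Bset_images_disjoint (S T : Set (ℕ →₀ ℕ)) :
    Disjoint (shMon '' S) ((fun v => Finsupp.single 0 1 + v) '' T) := by
  rw [Set.disjoint_left]
  rintro a ⟨u, -, rfl⟩ ⟨v, -, hv⟩
  have h0 := congrArg (fun f : ℕ →₀ ℕ => f 0) hv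
  simp [shMon_apply_zero, Finsupp.add_apply] at h0

lemma BsetAux_succ : ∀ fuel l, l.sum + l.length ≤ fuel →
    BsetAux (fuel + 1) l = BsetAux fuel l := by
  intro fuel
  induction fuel using Nat.strong_induction_on with
  | _ fuel ih =>
    intro l hl
    match fuel, l with
    | 0, [] => rfl
    | 0, x :: ks => simp [List.length_cons] at hl
    | f + 1, [] => rfl
    | f + 1, 0 :: ks =>
        show BsetAux (f + 1) ks = BsetAux f ks
        simp only [List.sum_cons, List.length_cons] at hl
        exact ih f (Nat.lt_succ_self f) ks (by omega)
    | f + 1, (k + 1) :: ks =>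
        show shMon '' BsetAux (f + 1) ks ∪ _ = shMon '' BsetAux f ks ∪ _
        simp only [List.sum_cons, List.length_cons] at hl
        rw [ih f (Nat.lt_succ_self f) ks (by omega),
          ih f (Nat.lt_succ_self f) (sortDesc (k :: ks))
            (by rw [sortDesc_sum, sortDesc_length]; simp only [List.sum_cons,
              List.length_cons]; omega)]

lemma BsetAux_eq (fuel : ℕ) (l : List ℕ) (h : l.sum + l.length ≤ fuel) :
    BsetAux fuel l = Bset l := by
  induction fuel with
  | zero =>
      have : l = [] := by cases l with
        | nil => rfl
        | cons a as => simp [List.length_cons] at h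
      subst this; rfl
  | succ f ihf =>
      by_cases h' : l.sum + l.length ≤ f
      · rw [BsetAux_succ f l h', ihf h']
      · have hm : l.sum + l.length = f + 1 := by omega
        unfold Bset
        rw [hm]

lemma Bset_nil : Bset [] = {0} := rfl

lemma Bset_zero_cons (ks : List ℕ) : Bset (0 :: ks) = Bset ks := by
  show BsetAux ((0 :: ks).sum + (0 :: ks).length) (0 :: ks) = Bset ks
  have h : (0 :: ks).sum + (0 :: ks).length = (ks.sum + ks.length) + 1 := by
    simp [List.sum_cons, List.length_cons]; omega
  rw [h]
  rfl

lemma Bset_cons (k : ℕ) (ks : List ℕ) :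
    Bset ((k + 1) :: ks) =
      shMon '' Bset ks ∪
        (fun v => Finsupp.single 0 1 + v) '' Bset (sortDesc (k :: ks)) := by
  show BsetAux (((k + 1) :: ks).sum + ((k + 1) :: ks).length) _ = _
  have h : ((k + 1) :: ks).sum + ((k + 1) :: ks).length
      = (ks.sum + ks.length + k + 1) + 1 := by
    simp [List.sum_cons, List.length_cons]; omega
  rw [h]
  show shMon '' BsetAux (ks.sum + ks.length + k + 1) ks ∪
      (fun v => Finsupp.single 0 1 + v) ''
        BsetAux (ks.sum + ks.length + k + 1) (sortDesc (k :: ks)) = _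
  rw [BsetAux_eq _ ks (by omega),
    BsetAux_eq _ (sortDesc (k :: ks))
      (by rw [sortDesc_sum, sortDesc_length]
          simp only [List.sum_cons, List.length_cons]; omega)]

lemma Bset_finite_card : ∀ n l, l.sum + l.length ≤ n →
    (Bset l).Finite ∧ Nat.card (Bset l) = (l.map (· + 1)).prod := by
  intro n
  induction n using Nat.strong_induction_on with
  | _ n ih =>
    intro l hl
    match l with
    | [] => simp [Bset_nil]
    | 0 :: ks =>
        simp only [List.sum_cons, List.length_cons] at hl
        rw [Bset_zero_cons]
        have h := ih (ks.sum + ks.length) (by omega) ks le_rfl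
        simpa using h
    | (k + 1) :: ks =>
        simp only [List.sum_cons, List.length_cons] at hl
        rw [Bset_cons]
        have hks := ih (ks.sum + ks.length) (by omega) ks le_rfl
        have hsk := ih ((sortDesc (k :: ks)).sum + (sortDesc (k :: ks)).length)
          (by rw [sortDesc_sum, sortDesc_length]
              simp only [List.sum_cons, List.length_cons]; omega)
          (sortDesc (k :: ks)) le_rfl
        have hinj2 : Function.Injective (fun v : ℕ →₀ ℕ => Finsupp.single 0 1 + v) :=
          fun a b hab => by simpa using add_right_injective (Finsupp.single 0 1) hab
        refine ⟨(hks.1.image shMon).union (hsk.1.image _), ?_⟩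
        rw [Nat.card_coe_set_eq,
          Set.ncard_union_eq (Bset_images_disjoint _ _) (hks.1.image _) (hsk.1.image _),
          Set.ncard_image_of_injective _ shMon_injective,
          Set.ncard_image_of_injective _ hinj2,
          ← Nat.card_coe_set_eq, ← Nat.card_coe_set_eq, hks.2, hsk.2]
        have hperm : ((sortDesc (k :: ks)).map (· + 1)).Perm ((k :: ks).map (· + 1)) :=
          (sortDesc_perm (k :: ks)).map _
        rw [hperm.prod_eq]
        simp only [List.map_cons, List.prod_cons]
        ring

/-- The union in the defining recursion of `B(k_1,…,k_N)` is disjoint (the monomials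
coming from `sh` have `f_0`-exponent `0`, those from `f_0·B(…)` have `f_0`-exponent
`≥ 1`), and `|B(k_1,…,k_N)| = ∏_{i=1}^N (k_i + 1)`. -/
theorem Bset_disjoint_card (l : List ℕ) (hl : l.Pairwise (fun a b => b ≤ a)) :
    (∀ k ks, l = (k + 1) :: ks →
      Disjoint (shMon '' Bset ks)
        ((fun v => Finsupp.single 0 1 + v) '' Bset (sortDesc (k :: ks)))) ∧
    Nat.card (Bset l) = (l.map (· + 1)).prod := by
  refine ⟨fun k ks _ => Bset_images_disjoint _ _, (Bset_finite_card _ l le_rfl).2⟩
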